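/- Let α = (α_1,…,α_r) be a tuple of rational numbers in (0,1) and let d be the least common multiple of their denominators. Consider the generalized hypergeometric coefficients Q(n) := (α_1)_n ⋯ (α_r)_n / (n!)^r. Then for every prime p > d there exists a positive integer k (one may take k to be the multiplicative order of p modulo d) such that Q has the p^k-Lucas property: Q(n) ∈ ℤ_(p) for all n, and Q(a + p^k·m) ≡ Q(a)·Q(m) mod p·ℤ_(p) for all a ∈ {0,…,p^k−1} and m ∈ ℕ. Equivalently, the hypergeometric series F(x) = Σ_{n≥0} Q(n) x^n belongs to 𝔏_1(ℤ,S) for S the set of primes larger than d. -/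

import Mathlib

/-
  Proof of the p^k-Lucas property for generalized hypergeometric coefficients.

  Strategy: work in ℚ_[p].  For α = s/D with 0 < s < D and p ∤ D, the coefficient
  (α)_n/n! equals q D s n := Pp D s n / (D^n n!) where Pp D s n = ∏_{j<n} (s+jD).
  A factorisation of Pp and of factorials along blocks of p consecutive indices
  (lemmas F1, F2) gives the key identity (lemma key), from which p-integrality (INT)
  and the one-step Dwork/Lucas congruence (STEP) follow; iterating k times (ITER) and
  using that the Dwork map s ↦ dst p D s is a cycle of length k when p^k ≡ 1 mod D
  (dst_cycle) yields the p^k-Lucas property for each factor, and a product argument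
  concludes.
-/

namespace HypLucas
open Finset Nat

variable {p : ℕ} [hp : Fact p.Prime]

/-- numerator product -/
def Pp (D s n : ℕ) : ℕ := ∏ j ∈ Finset.range n, (s + j * D)

lemma Pp_zero (D s : ℕ) : Pp D s 0 = 1 := rfl

lemma Pp_succ (D s n : ℕ) : Pp D s (n + 1) = Pp D s n * (s + n * D) :=
  Finset.prod_range_succ _ _

lemma Pp_pos {D s : ℕ} (hs : 0 < s) (n : ℕ) : 0 < Pp D s n :=
  Finset.prod_pos fun j _ => by positivity

/-- Dwork residue: the unique `a < p` with `p ∣ s + a * D`. -/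
noncomputable def ast (p D s : ℕ) : ℕ := (-(s : ZMod p) * (D : ZMod p)⁻¹).val

/-- Dwork step on numerators. -/
noncomputable def dst (p D s : ℕ) : ℕ := (s + ast p D s * D) / p


lemma ast_lt (D s : ℕ) : ast p D s < p := ZMod.val_lt _

lemma ast_spec {D : ℕ} (hD : ¬ p ∣ D) (s : ℕ) : p ∣ s + ast p D s * D := by
  have hD0 : (D : ZMod p) ≠ 0 := by
    simpa [ZMod.natCast_eq_zero_iff] using hD
  have : ((s + ast p D s * D : ℕ) : ZMod p) = 0 := by
    push_cast
    rw [ast, ZMod.natCast_val, ZMod.cast_id]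
    field_simp
    ring
  exact (ZMod.natCast_eq_zero_iff _ _).mp this

lemma dst_mul (hD : ¬ p ∣ D) (s : ℕ) : p * dst p D s = s + ast p D s * D :=
  Nat.mul_div_cancel' (ast_spec hD s) |>.symm ▸ (Nat.mul_div_cancel' (ast_spec hD s))

lemma dst_pos {D s : ℕ} (hD : ¬ p ∣ D) (hs : 0 < s) : 0 < dst p D s := by
  have h := dst_mul hD (p := p) (D := D) s
  nlinarith [hp.out.pos, Nat.zero_le (ast p D s * D)]

lemma dst_lt {D s : ℕ} (hD : ¬ p ∣ D) (hsD : s < D) : dst p D s < D := by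
  have h := dst_mul hD (p := p) (D := D) s
  have ha := ast_lt (p := p) D s
  have hp1 : 1 ≤ p := hp.out.pos
  nlinarith

/-- product of the nonzero elements of `ZMod p` -/
noncomputable def K (p : ℕ) [NeZero p] : ZMod p :=
  ∏ x ∈ Finset.univ.erase (0 : ZMod p), x

/-- two naturals in a window of length `p` congruent mod `p` are equal -/
lemma window_eq {n j j' : ℕ} (h : (j : ZMod p) = (j' : ZMod p))
    (hj : n ≤ j) (hj2 : j < n + p) (hj' : n ≤ j') (hj2' : j' < n + p) : j = j' := by
  have hmod : j ≡ j' [MOD p] := (ZMod.natCast_eq_natCast_iff _ _ _).mp h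
  have hdvd : (p : ℤ) ∣ (j' : ℤ) - j := Nat.modEq_iff_dvd.mp hmod
  have : ((j' : ℤ) - j) = 0 := by
    apply Int.eq_zero_of_abs_lt_dvd hdvd
    rw [abs_lt]
    omega
  omega

/-- the product of `A + B * j` over a window of length `p` with the zero term removed
equals the product of all nonzero elements of `ZMod p`. -/
lemma block_prod {A B : ZMod p} (hB : B ≠ 0) {n j₀ : ℕ}
    (h1 : n ≤ j₀) (h2 : j₀ < n + p) (h0 : A + B * (j₀ : ZMod p) = 0) :
    ∏ j ∈ (Finset.Ico n (n + p)).erase j₀, (A + B * (j : ZMod p))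
      = K p := by
  classical
  set f : ℕ → ZMod p := fun j => A + B * (j : ZMod p) with hf
  have hinj : Set.InjOn f ((Finset.Ico n (n+p)).erase j₀ : Finset ℕ) := by
    intro x hx y hy hxy
    simp only [Finset.coe_erase, Set.mem_diff, Finset.coe_Ico, Set.mem_Ico] at hx hy
    have : (x : ZMod p) = (y : ZMod p) := by
      have := hxy
      simp only [hf] at this
      have hBx : B * (x : ZMod p) = B * (y : ZMod p) := by linear_combination this
      exact mul_left_cancel₀ hB hBx
    exact window_eq this hx.1.1 hx.1.2 hy.1.1 hy.1.2
  have himg : ((Finset.Ico n (n+p)).erase j₀).image f = Finset.univ.erase (0 : ZMod p) := by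
    apply Finset.eq_of_subset_of_card_le
    · intro x hx
      simp only [Finset.mem_image] at hx
      obtain ⟨j, hj, rfl⟩ := hx
      simp only [Finset.mem_erase, Finset.mem_Ico] at hj
      refine Finset.mem_erase.mpr ⟨?_, Finset.mem_univ _⟩
      intro hzero
      apply hj.1
      have : (j : ZMod p) = (j₀ : ZMod p) := by
        have : B * (j : ZMod p) = B * (j₀ : ZMod p) := by
          have h0' : B * (j₀ : ZMod p) = -A := by linear_combination h0
          have hz' : B * (j : ZMod p) = -A := by
            simp only [hf] at hzero; linear_combination hzero
          rw [hz', h0']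
        exact mul_left_cancel₀ hB this
      exact window_eq this hj.2.1 hj.2.2 h1 h2
    · rw [Finset.card_image_of_injOn hinj]
      have hcard1 : (Finset.univ.erase (0 : ZMod p)).card = p - 1 := by
        rw [Finset.card_erase_of_mem (Finset.mem_univ _)]
        simp [ZMod.card]
      have hj₀ : j₀ ∈ Finset.Ico n (n+p) := Finset.mem_Ico.mpr ⟨h1, h2⟩
      rw [hcard1, Finset.card_erase_of_mem hj₀, Nat.card_Ico]
      omega
  calc ∏ j ∈ (Finset.Ico n (n+p)).erase j₀, f j
      = ∏ x ∈ ((Finset.Ico n (n+p)).erase j₀).image f, x := by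
        rw [Finset.prod_image (fun x hx y hy => hinj hx hy)]
    _ = K p := by rw [himg]; rfl

lemma cast_ne_zero_of_not_dvd {D : ℕ} (hD : ¬ p ∣ D) : (D : ZMod p) ≠ 0 := by
  simpa [ZMod.natCast_eq_zero_iff] using hD

lemma eq_of_dvd_window {D s : ℕ} (hD : ¬ p ∣ D) {n j j₀ : ℕ}
    (hj0 : p ∣ s + j₀ * D) (hj : p ∣ s + j * D)
    (h1 : n ≤ j) (h2 : j < n + p) (h3 : n ≤ j₀) (h4 : j₀ < n + p) : j = j₀ := by
  have hz : ((s : ZMod p) + j * D) = 0 := by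
    have := (ZMod.natCast_eq_zero_iff (s + j * D) p).mpr hj
    push_cast at this; exact this
  have hz0 : ((s : ZMod p) + j₀ * D) = 0 := by
    have := (ZMod.natCast_eq_zero_iff (s + j₀ * D) p).mpr hj0
    push_cast at this; exact this
  have hDj : (D : ZMod p) * j = (D : ZMod p) * j₀ := by linear_combination hz - hz0
  exact window_eq (mul_left_cancel₀ (cast_ne_zero_of_not_dvd hD) hDj) h1 h2 h3 h4

lemma factorial_split (n t : ℕ) :
    (n + t) ! = n ! * ∏ j ∈ Finset.Ico (n + 1) (n + t + 1), j := by
  rw [← Finset.prod_Ico_id_eq_factorial, ← Finset.prod_Ico_id_eq_factorial]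
  rw [← Finset.prod_Ico_consecutive _ (by omega : 1 ≤ n + 1) (by omega : n + 1 ≤ n + t + 1)]

lemma F2 {v : ℕ} (hv : v < p) (m : ℕ) :
    ∃ V : ℕ, ¬ p ∣ V ∧ (V : ZMod p) = (v ! : ZMod p) * K p ^ m ∧
      (v + p * m) ! = p ^ m * m ! * V := by
  induction m with
  | zero =>
    refine ⟨v !, ?_, by simp, by simp⟩
    rw [hp.out.dvd_factorial]; omega
  | succ m ih =>
    obtain ⟨V, hVcop, hVmod, hVeq⟩ := ih
    set n := v + p * m with hn
    have hsplit : (v + p * (m + 1)) ! = n ! * ∏ j ∈ Finset.Ico (n + 1) (n + p + 1), j := by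
      have : v + p * (m + 1) = n + p := by ring
      rw [this, factorial_split]
    set j₀ := p * (m + 1) with hj₀
    have hpm : j₀ = p * m + p := by rw [hj₀]; ring
    have hj₀mem : j₀ ∈ Finset.Ico (n + 1) (n + p + 1) := by
      simp only [Finset.mem_Ico]; omega
    have hblock : ∏ j ∈ Finset.Ico (n + 1) (n + p + 1), j
        = j₀ * ∏ j ∈ (Finset.Ico (n + 1) (n + p + 1)).erase j₀, j :=
      (Finset.mul_prod_erase _ _ hj₀mem).symm
    set V' := ∏ j ∈ (Finset.Ico (n + 1) (n + p + 1)).erase j₀, j with hV'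
    have hV'cop : ¬ p ∣ V' := by
      intro hdvd
      obtain ⟨j, hjmem, hjdvd⟩ := (hp.out.prime.dvd_finset_prod_iff _).mp hdvd
      simp only [Finset.mem_erase, Finset.mem_Ico] at hjmem
      apply hjmem.1
      have h1 : (j : ZMod p) = (j₀ : ZMod p) := by
        have : (j : ZMod p) = 0 := (ZMod.natCast_eq_zero_iff _ _).mpr hjdvd
        have h2 : (j₀ : ZMod p) = 0 := by
          rw [hj₀]; push_cast [ZMod.natCast_self]; ring
        rw [this, h2]
      exact window_eq h1 hjmem.2.1 (by omega) (by omega) (by omega)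
    have hV'K : (V' : ZMod p) = K p := by
      rw [hV', Nat.cast_prod]
      have := block_prod (p := p) (A := (0 : ZMod p)) (B := (1 : ZMod p)) one_ne_zero
        (n := n + 1) (j₀ := j₀) (by simpa using Finset.mem_Ico.mp hj₀mem |>.1)
        (by have := (Finset.mem_Ico.mp hj₀mem).2; omega)
        (by push_cast [hj₀, ZMod.natCast_self]; ring)
      have harr : n + 1 + p = n + p + 1 := by omega
      rw [harr] at this
      simpa using this
    refine ⟨V * V', ?_, ?_, ?_⟩
    · intro h
      rcases (Nat.Prime.dvd_mul hp.out).mp h with h | h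
      exacts [hVcop h, hV'cop h]
    · push_cast [hVmod, hV'K]; ring
    · rw [hsplit, hblock, hVeq, hj₀, Nat.factorial_succ]; ring
/-- number of extra `p`-divisible factors: 1 if `ast < v` else 0. -/
noncomputable def eps (p D s v : ℕ) : ℕ := if ast p D s < v then 1 else 0

/-- the unit part of `Pp D s v` -/
noncomputable def Wnum (p D s v : ℕ) : ℕ :=
  if ast p D s < v then ∏ j ∈ (Finset.range v).erase (ast p D s), (s + j * D)
  else Pp D s v

lemma Pp_split (D s n t : ℕ) :
    Pp D s (n + t) = Pp D s n * ∏ j ∈ Finset.Ico n (n + t), (s + j * D) := by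
  rw [Pp, Pp, Finset.range_eq_Ico, Finset.range_eq_Ico]
  exact (Finset.prod_Ico_consecutive (fun j => s + j * D) (Nat.zero_le n)
    (by omega : n ≤ n + t)).symm

lemma F1 {D s : ℕ} (hD : ¬ p ∣ D) {v : ℕ} (hv : v < p) (m : ℕ) :
    ∃ U : ℕ, ¬ p ∣ U ∧ (U : ZMod p) = (Wnum p D s v : ZMod p) * K p ^ m ∧
      Pp D s (v + p * m) = p ^ (m + eps p D s v) * Pp D (dst p D s) (m + eps p D s v) * U := by
  have ha := ast_lt (p := p) D s
  have hdm := dst_mul (p := p) hD s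
  have hastdvd : p ∣ s + ast p D s * D := ⟨dst p D s, by omega⟩
  induction m with
  | zero =>
    by_cases hcase : ast p D s < v
    · -- ε = 1
      have hmem : ast p D s ∈ Finset.range v := Finset.mem_range.mpr hcase
      have hsplit : Pp D s v = (s + ast p D s * D) *
          ∏ j ∈ (Finset.range v).erase (ast p D s), (s + j * D) :=
        (Finset.mul_prod_erase _ _ hmem).symm
      refine ⟨Wnum p D s v, ?_, by simp, ?_⟩
      · rw [Wnum, if_pos hcase]
        intro hdvd
        obtain ⟨j, hjmem, hjdvd⟩ := (hp.out.prime.dvd_finset_prod_iff _).mp hdvd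
        simp only [Finset.mem_erase, Finset.mem_range] at hjmem
        exact hjmem.1 (eq_of_dvd_window hD hastdvd hjdvd (Nat.zero_le j) (by omega)
          (Nat.zero_le _) (by omega))
      · rw [eps, if_pos hcase, Wnum, if_pos hcase]
        have h1 : Pp D (dst p D s) (0 + 1) = dst p D s := by
          rw [Pp_succ]; simp [Pp]
        rw [h1]
        have h2 : s + ast p D s * D = p * dst p D s := by omega
        have h3 : v + p * 0 = v := by ring
        rw [h3, hsplit, h2]; ring
    · -- ε = 0
      refine ⟨Pp D s v, ?_, by rw [Wnum, if_neg hcase]; simp, ?_⟩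
      · intro hdvd
        obtain ⟨j, hjmem, hjdvd⟩ := (hp.out.prime.dvd_finset_prod_iff _).mp hdvd
        simp only [Finset.mem_range] at hjmem
        have : j = ast p D s := eq_of_dvd_window hD hastdvd hjdvd (Nat.zero_le j) (by omega)
          (Nat.zero_le _) (by omega)
        omega
      · rw [eps, if_neg hcase]; simp [Pp]
  | succ m ih =>
    obtain ⟨U, hUcop, hUmod, hUeq⟩ := ih
    set e := eps p D s v with he
    have hesplit : e = if ast p D s < v then 1 else 0 := rfl
    set n := v + p * m with hn
    have hsplit : Pp D s (v + p * (m + 1)) =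
        Pp D s n * ∏ j ∈ Finset.Ico n (n + p), (s + j * D) := by
      have harr : v + p * (m + 1) = n + p := by ring
      rw [harr, Pp_split]
    set j₀ := ast p D s + p * (m + e) with hj₀
    have hj₀lin : j₀ = ast p D s + p * m + p * e := by rw [hj₀]; ring
    have hj₀mem : j₀ ∈ Finset.Ico n (n + p) := by
      simp only [Finset.mem_Ico]
      rcases Nat.lt_or_ge (ast p D s) v with hc | hc
      · have he1 : e = 1 := by rw [hesplit, if_pos hc]
        have hpe : p * e = p := by rw [he1, Nat.mul_one]
        omega
      · have he0 : e = 0 := by rw [hesplit, if_neg (by omega)]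
        have hpe : p * e = 0 := by rw [he0, Nat.mul_zero]
        omega
    have hj₀dvd : p ∣ s + j₀ * D := by
      refine ⟨dst p D s + (m + e) * D, ?_⟩
      have h1 : s + j₀ * D = (s + ast p D s * D) + p * ((m + e) * D) := by rw [hj₀]; ring
      have h2 : p * (dst p D s + (m + e) * D) = p * dst p D s + p * ((m + e) * D) := by ring
      omega
    have hblock : ∏ j ∈ Finset.Ico n (n + p), (s + j * D)
        = (s + j₀ * D) * ∏ j ∈ (Finset.Ico n (n + p)).erase j₀, (s + j * D) :=
      (Finset.mul_prod_erase _ _ hj₀mem).symm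
    set U' := ∏ j ∈ (Finset.Ico n (n + p)).erase j₀, (s + j * D) with hU'
    have hU'cop : ¬ p ∣ U' := by
      intro hdvd
      obtain ⟨j, hjmem, hjdvd⟩ := (hp.out.prime.dvd_finset_prod_iff _).mp hdvd
      simp only [Finset.mem_erase, Finset.mem_Ico] at hjmem
      exact hjmem.1 (eq_of_dvd_window hD hj₀dvd hjdvd hjmem.2.1 hjmem.2.2
        (Finset.mem_Ico.mp hj₀mem).1 (Finset.mem_Ico.mp hj₀mem).2)
    have hU'K : (U' : ZMod p) = K p := by
      rw [hU', Nat.cast_prod]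
      have h0 : (s : ZMod p) + (D : ZMod p) * (j₀ : ℕ) = 0 := by
        have := (ZMod.natCast_eq_zero_iff (s + j₀ * D) p).mpr hj₀dvd
        push_cast at this
        linear_combination this
      have := block_prod (p := p) (A := (s : ZMod p)) (B := (D : ZMod p))
        (cast_ne_zero_of_not_dvd hD) (Finset.mem_Ico.mp hj₀mem).1
        (Finset.mem_Ico.mp hj₀mem).2 h0
      rw [← this]
      apply Finset.prod_congr rfl
      intro x hx
      push_cast; ring
    refine ⟨U * U', ?_, ?_, ?_⟩
    · intro h
      rcases (Nat.Prime.dvd_mul hp.out).mp h with h | h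
      exacts [hUcop h, hU'cop h]
    · push_cast [hUmod, hU'K]; ring
    · have hstep : s + j₀ * D = p * (dst p D s + (m + e) * D) := by
        have h1 : s + j₀ * D = (s + ast p D s * D) + p * ((m + e) * D) := by rw [hj₀]; ring
        have h2 : p * (dst p D s + (m + e) * D) = p * dst p D s + p * ((m + e) * D) := by ring
        omega
      have hPp' : Pp D (dst p D s) (m + 1 + e) =
          Pp D (dst p D s) (m + e) * (dst p D s + (m + e) * D) := by
        have : m + 1 + e = (m + e) + 1 := by omega
        rw [this, Pp_succ]
      rw [hsplit, hblock, hUeq, hstep, hPp']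
      ring
noncomputable def q (p D s n : ℕ) [Fact p.Prime] : ℚ_[p] :=
  (Pp D s n : ℚ_[p]) / ((D : ℚ_[p]) ^ n * (n ! : ℚ_[p]))

lemma eps_factorial (p D s v m : ℕ) :
    (m + eps p D s v) ! = (m + 1) ^ eps p D s v * m ! := by
  rw [eps]; split
  · simp [Nat.factorial_succ]
  · simp

lemma key {D s : ℕ} (hD : ¬ p ∣ D) {v : ℕ} (hv : v < p) (m : ℕ) :
    ∃ U V : ℕ, ¬ p ∣ U ∧ ¬ p ∣ V ∧
      (U : ZMod p) = (Wnum p D s v : ZMod p) * K p ^ m ∧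
      (V : ZMod p) = (v ! : ZMod p) * K p ^ m ∧
      (V : ℚ_[p]) * (D : ℚ_[p]) ^ (v + p * m) * q p D s (v + p * m) =
        (p : ℚ_[p]) ^ eps p D s v * ((m + 1 : ℕ) : ℚ_[p]) ^ eps p D s v * (U : ℚ_[p]) *
          (D : ℚ_[p]) ^ (m + eps p D s v) * q p D (dst p D s) (m + eps p D s v) := by
  obtain ⟨U, hUcop, hUmod, hUeq⟩ := F1 (s := s) hD hv m
  obtain ⟨V, hVcop, hVmod, hVeq⟩ := F2 hv m
  have hD0 : (D : ℚ_[p]) ≠ 0 :=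
    Nat.cast_ne_zero.mpr (by rintro rfl; exact hD (dvd_zero p))
  have hV0 : ((V : ℕ) : ℚ_[p]) ≠ 0 :=
    Nat.cast_ne_zero.mpr (by rintro rfl; exact hVcop (dvd_zero p))
  have hp0 : (p : ℚ_[p]) ≠ 0 := Nat.cast_ne_zero.mpr hp.out.ne_zero
  have hm0 : ((m ! : ℕ) : ℚ_[p]) ≠ 0 := Nat.cast_ne_zero.mpr (Nat.factorial_ne_zero _)
  have hf1 : ((v + p * m) ! : ℚ_[p]) ≠ 0 := Nat.cast_ne_zero.mpr (Nat.factorial_ne_zero _)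
  have hf2 : (((m + eps p D s v)) ! : ℚ_[p]) ≠ 0 := Nat.cast_ne_zero.mpr (Nat.factorial_ne_zero _)
  have e1 : (Pp D s (v + p * m) : ℚ_[p]) =
      (p : ℚ_[p]) ^ (m + eps p D s v) * (Pp D (dst p D s) (m + eps p D s v) : ℚ_[p]) * U := by
    exact_mod_cast congrArg (Nat.cast : ℕ → ℚ_[p]) hUeq
  have e2 : ((v + p * m) ! : ℚ_[p]) = (p : ℚ_[p]) ^ m * (m ! : ℚ_[p]) * V := by
    exact_mod_cast congrArg (Nat.cast : ℕ → ℚ_[p]) hVeq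
  have e3 : ((m + eps p D s v) ! : ℚ_[p]) =
      ((m + 1 : ℕ) : ℚ_[p]) ^ eps p D s v * (m ! : ℚ_[p]) := by
    exact_mod_cast congrArg (Nat.cast : ℕ → ℚ_[p]) (eps_factorial p D s v m)
  refine ⟨U, V, hUcop, hVcop, hUmod, hVmod, ?_⟩
  have hB1 : ((D : ℚ_[p]) ^ (v + p * m) * ((v + p * m) ! : ℚ_[p])) ≠ 0 :=
    mul_ne_zero (pow_ne_zero _ hD0) hf1
  have hB2 : ((D : ℚ_[p]) ^ (m + eps p D s v) * ((m + eps p D s v) ! : ℚ_[p])) ≠ 0 :=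
    mul_ne_zero (pow_ne_zero _ hD0) hf2
  rw [q, q]
  rw [show (V : ℚ_[p]) * (D : ℚ_[p]) ^ (v + p * m) *
      ((Pp D s (v + p * m) : ℚ_[p]) / ((D : ℚ_[p]) ^ (v + p * m) * ((v + p * m) ! : ℚ_[p])))
      = ((V : ℚ_[p]) * (D : ℚ_[p]) ^ (v + p * m) * (Pp D s (v + p * m) : ℚ_[p])) /
        ((D : ℚ_[p]) ^ (v + p * m) * ((v + p * m) ! : ℚ_[p])) from by ring]
  rw [show (p : ℚ_[p]) ^ eps p D s v * ((m + 1 : ℕ) : ℚ_[p]) ^ eps p D s v * (U : ℚ_[p]) *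
      (D : ℚ_[p]) ^ (m + eps p D s v) *
      ((Pp D (dst p D s) (m + eps p D s v) : ℚ_[p]) /
        ((D : ℚ_[p]) ^ (m + eps p D s v) * ((m + eps p D s v) ! : ℚ_[p])))
      = ((p : ℚ_[p]) ^ eps p D s v * ((m + 1 : ℕ) : ℚ_[p]) ^ eps p D s v * (U : ℚ_[p]) *
          (D : ℚ_[p]) ^ (m + eps p D s v) * (Pp D (dst p D s) (m + eps p D s v) : ℚ_[p])) /
        ((D : ℚ_[p]) ^ (m + eps p D s v) * ((m + eps p D s v) ! : ℚ_[p])) from by ring]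
  rw [div_eq_div_iff hB1 hB2, e1, e2, e3]
  push_cast
  ring
lemma norm_nat_unit {n : ℕ} (hn : ¬ p ∣ n) : ‖(n : ℚ_[p])‖ = 1 := by
  have h1 : ‖((n : ℤ) : ℚ_[p])‖ ≤ 1 := Padic.norm_int_le_one _
  have h2 : ¬ ‖((n : ℤ) : ℚ_[p])‖ < 1 := by
    rw [Padic.norm_intCast_lt_one_iff]
    exact_mod_cast hn
  push_cast at h1 h2 ⊢
  linarith [lt_or_eq_of_le h1]

lemma norm_nat_le {n : ℕ} : ‖(n : ℚ_[p])‖ ≤ 1 := by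
  have h1 : ‖((n : ℤ) : ℚ_[p])‖ ≤ 1 := Padic.norm_int_le_one _
  push_cast at h1; exact h1

lemma norm_sub_le_max (a b : ℚ_[p]) : ‖a - b‖ ≤ max ‖a‖ ‖b‖ := by
  simpa [sub_eq_add_neg] using Padic.nonarchimedean a (-b)

lemma eps_le_one (p D s v : ℕ) : eps p D s v ≤ 1 := by
  rw [eps]; split <;> omega

/-- from the key identity : norm recursion -/
lemma norm_q_eq {D s : ℕ} (hD : ¬ p ∣ D) {v : ℕ} (hv : v < p) (m : ℕ) :
    ‖q p D s (v + p * m)‖ = ‖(p : ℚ_[p])‖ ^ eps p D s v *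
      ‖((m + 1 : ℕ) : ℚ_[p])‖ ^ eps p D s v * ‖q p D (dst p D s) (m + eps p D s v)‖ := by
  obtain ⟨U, V, hUcop, hVcop, hUmod, hVmod, hkey⟩ := key (s := s) hD hv m
  have h := congrArg (fun x : ℚ_[p] => ‖x‖) hkey
  simp only [norm_mul, norm_pow] at h
  rw [norm_nat_unit hVcop, norm_nat_unit hUcop, norm_nat_unit hD] at h
  simpa using h

lemma norm_q_le_rec {D s : ℕ} (hD : ¬ p ∣ D) {v : ℕ} (hv : v < p) (m : ℕ) :
    ‖q p D s (v + p * m)‖ ≤ ‖q p D (dst p D s) (m + eps p D s v)‖ := by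
  rw [norm_q_eq hD hv m]
  have h1 : ‖(p : ℚ_[p])‖ ^ eps p D s v ≤ 1 :=
    pow_le_one₀ (norm_nonneg _) norm_nat_le
  have h2 : ‖((m + 1 : ℕ) : ℚ_[p])‖ ^ eps p D s v ≤ 1 :=
    pow_le_one₀ (norm_nonneg _) norm_nat_le
  calc ‖(p : ℚ_[p])‖ ^ eps p D s v * ‖((m + 1 : ℕ) : ℚ_[p])‖ ^ eps p D s v *
        ‖q p D (dst p D s) (m + eps p D s v)‖
      ≤ 1 * 1 * ‖q p D (dst p D s) (m + eps p D s v)‖ := by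
        gcongr
    _ = ‖q p D (dst p D s) (m + eps p D s v)‖ := by ring

lemma INT {D : ℕ} (hD : ¬ p ∣ D) (hDp : D < p) :
    ∀ n s : ℕ, 0 < s → s < D → ‖q p D s n‖ ≤ 1 := by
  intro n
  induction n using Nat.strong_induction_on with
  | _ n ih =>
    intro s hs hsD
    by_cases hn : n < p
    · rw [q, norm_div, norm_mul, norm_pow, norm_nat_unit hD]
      have hfac : ‖((n ! : ℕ) : ℚ_[p])‖ = 1 := by
        apply norm_nat_unit
        rw [hp.out.dvd_factorial]; omega
      rw [hfac]
      simpa using (norm_nat_le (p := p) (n := Pp D s n))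
    · push_neg at hn
      set v := n % p with hv'
      set m := n / p with hm'
      have hvm : v + p * m = n := Nat.mod_add_div n p
      have hv : v < p := Nat.mod_lt _ hp.out.pos
      have hm : 1 ≤ m := (Nat.one_le_div_iff hp.out.pos).mpr hn
      have hp3 : 3 ≤ p := by omega
      have hrec := norm_q_le_rec (s := s) hD hv m
      rw [hvm] at hrec
      have hlt : m + eps p D s v < n := by
        have h1 := eps_le_one p D s v
        have h2 : 3 * m ≤ p * m := Nat.mul_le_mul_right m (by omega)
        omega
      exact le_trans hrec (ih _ hlt (dst p D s) (dst_pos hD hs) (dst_lt hD hsD))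

lemma q_v_eq {D s : ℕ} (v : ℕ) :
    q p D s v = (Pp D s v : ℚ_[p]) / ((D : ℚ_[p]) ^ v * (v ! : ℚ_[p])) := rfl

lemma STEP {D s : ℕ} (hD : ¬ p ∣ D) (hDp : D < p) (hs : 0 < s) (hsD : s < D)
    {v : ℕ} (hv : v < p) (m : ℕ) :
    ‖q p D s (v + p * m) - q p D s v * q p D (dst p D s) m‖ < 1 := by
  have hD0 : (D : ℚ_[p]) ≠ 0 :=
    Nat.cast_ne_zero.mpr (by rintro rfl; exact hD (dvd_zero p))
  have hqm_le : ‖q p D (dst p D s) m‖ ≤ 1 :=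
    INT hD hDp m (dst p D s) (dst_pos hD hs) (dst_lt hD hsD)
  have hplt : ‖(p : ℚ_[p])‖ < 1 := Padic.norm_p_lt_one
  by_cases hc : ast p D s < v
  · -- ε = 1 : both terms have norm < 1
    have he : eps p D s v = 1 := if_pos hc
    have h1 : ‖q p D s (v + p * m)‖ < 1 := by
      have hr := norm_q_eq (s := s) hD hv m
      rw [he] at hr
      rw [hr]
      simp only [pow_one]
      have hc1 : ‖q p D (dst p D s) (m + 1)‖ ≤ 1 :=
        INT hD hDp (m + 1) (dst p D s) (dst_pos hD hs) (dst_lt hD hsD)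
      calc ‖(p : ℚ_[p])‖ * ‖((m + 1 : ℕ) : ℚ_[p])‖ * ‖q p D (dst p D s) (m + 1)‖
          ≤ ‖(p : ℚ_[p])‖ * 1 * 1 := by
            gcongr
            exact norm_nat_le
        _ = ‖(p : ℚ_[p])‖ := by ring
        _ < 1 := hplt
    have h2 : ‖q p D s v‖ < 1 := by
      have hr := norm_q_eq (s := s) hD hv 0
      simp only [Nat.mul_zero, Nat.add_zero] at hr
      rw [he] at hr
      rw [hr]
      simp only [pow_one]
      have hq1 : ‖q p D (dst p D s) (0 + 1)‖ ≤ 1 :=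
        INT hD hDp (0 + 1) (dst p D s) (dst_pos hD hs) (dst_lt hD hsD)
      calc ‖(p : ℚ_[p])‖ * ‖((0 + 1 : ℕ) : ℚ_[p])‖ * ‖q p D (dst p D s) (0 + 1)‖
          ≤ ‖(p : ℚ_[p])‖ * 1 * 1 := by
            gcongr
            exact norm_nat_le
        _ = ‖(p : ℚ_[p])‖ := by ring
        _ < 1 := hplt
    have h3 : ‖q p D s v * q p D (dst p D s) m‖ < 1 := by
      rw [norm_mul]
      calc ‖q p D s v‖ * ‖q p D (dst p D s) m‖ ≤ ‖q p D s v‖ * 1 :=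
            mul_le_mul_of_nonneg_left hqm_le (norm_nonneg _)
        _ = ‖q p D s v‖ := by ring
        _ < 1 := h2
    exact lt_of_le_of_lt (norm_sub_le_max _ _) (max_lt h1 h3)
  · -- ε = 0
    have he : eps p D s v = 0 := if_neg hc
    have hW : Wnum p D s v = Pp D s v := if_neg hc
    obtain ⟨U, V, hUcop, hVcop, hUmod, hVmod, hkey⟩ := key (s := s) hD hv m
    rw [hW] at hUmod
    rw [he] at hkey
    simp only [pow_zero, one_mul, Nat.add_zero] at hkey
    have hV0 : ((V : ℕ) : ℚ_[p]) ≠ 0 :=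
      Nat.cast_ne_zero.mpr (by rintro rfl; exact hVcop (dvd_zero p))
    have hvfac0 : ((v ! : ℕ) : ℚ_[p]) ≠ 0 := Nat.cast_ne_zero.mpr (Nat.factorial_ne_zero _)
    -- the integer measuring the difference
    set NN : ℤ := (U : ℤ) * (v ! : ℤ) - (Pp D s v : ℤ) * V * (D : ℤ) ^ ((p - 1) * m) with hNN
    have hNNdvd : (p : ℤ) ∣ NN := by
      rw [← ZMod.intCast_zmod_eq_zero_iff_dvd, hNN]
      push_cast
      rw [hUmod, hVmod]
      have hDz : ((D : ZMod p)) ≠ 0 := by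
        simpa [ZMod.natCast_eq_zero_iff] using hD
      have hferm : ((D : ZMod p)) ^ ((p - 1) * m) = 1 := by
        rw [pow_mul, ZMod.pow_card_sub_one_eq_one hDz, one_pow]
      rw [hferm]
      ring
    have hexp : v + p * m = (v + (p - 1) * m) + m := by
      have h1 : (p - 1) * m = p * m - m := by
        rw [Nat.sub_one_mul]
      have h2 : m ≤ p * m := Nat.le_mul_of_pos_left m hp.out.pos
      omega
    have hq : q p D s (v + p * m) =
        q p D (dst p D s) m * ((U : ℚ_[p]) * (D : ℚ_[p]) ^ m) /
          ((V : ℚ_[p]) * (D : ℚ_[p]) ^ (v + p * m)) := by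
      rw [eq_div_iff (mul_ne_zero hV0 (pow_ne_zero _ hD0))]
      linear_combination hkey
    have hX : (U : ℚ_[p]) * (D : ℚ_[p]) ^ m / ((V : ℚ_[p]) * (D : ℚ_[p]) ^ (v + p * m))
        - q p D s v
        = (NN : ℚ_[p]) / ((V : ℚ_[p]) * (D : ℚ_[p]) ^ (v + (p - 1) * m) * (v ! : ℚ_[p])) := by
      rw [q_v_eq, hexp]
      push_cast [hNN]
      field_simp
      ring
    have hdiff : q p D s (v + p * m) - q p D s v * q p D (dst p D s) m
        = q p D (dst p D s) m *
          ((NN : ℚ_[p]) / ((V : ℚ_[p]) * (D : ℚ_[p]) ^ (v + (p - 1) * m) * (v ! : ℚ_[p]))) := by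
      rw [← hX, hq]; ring
    rw [hdiff, norm_mul, norm_div, norm_mul, norm_mul, norm_pow]
    rw [norm_nat_unit hVcop, norm_nat_unit hD,
      norm_nat_unit (p := p) (n := v !) (by rw [hp.out.dvd_factorial]; omega)]
    have hNNlt : ‖((NN : ℤ) : ℚ_[p])‖ < 1 := Padic.norm_intCast_lt_one_iff.mpr hNNdvd
    simp only [one_pow, mul_one, one_mul, div_one]
    calc ‖q p D (dst p D s) m‖ * ‖((NN : ℤ) : ℚ_[p])‖ ≤ 1 * ‖((NN : ℤ) : ℚ_[p])‖ :=
          mul_le_mul_of_nonneg_right hqm_le (norm_nonneg _)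
      _ = ‖((NN : ℤ) : ℚ_[p])‖ := by ring
      _ < 1 := hNNlt
lemma norm_sub_trans (a b c : ℚ_[p]) (h1 : ‖a - b‖ < 1) (h2 : ‖b - c‖ < 1) :
    ‖a - c‖ < 1 := by
  have h : a - c = (a - b) + (b - c) := by ring
  rw [h]
  exact lt_of_le_of_lt (Padic.nonarchimedean _ _) (max_lt h1 h2)

lemma norm_mul_sub (c a b : ℚ_[p]) (hc : ‖c‖ ≤ 1) (h : ‖a - b‖ < 1) :
    ‖c * a - c * b‖ < 1 := by
  have hh : c * a - c * b = c * (a - b) := by ring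
  rw [hh, norm_mul]
  calc ‖c‖ * ‖a - b‖ ≤ 1 * ‖a - b‖ := mul_le_mul_of_nonneg_right hc (norm_nonneg _)
    _ = ‖a - b‖ := by ring
    _ < 1 := h

lemma dst_iter_bounds {D s : ℕ} (hD : ¬ p ∣ D) (hs : 0 < s) (hsD : s < D) (k : ℕ) :
    0 < (dst p D)^[k] s ∧ (dst p D)^[k] s < D := by
  induction k with
  | zero => exact ⟨hs, hsD⟩
  | succ k ih =>
    rw [Function.iterate_succ_apply']
    exact ⟨dst_pos hD ih.1, dst_lt hD ih.2⟩

lemma dst_iter_modeq {D s : ℕ} (hD : ¬ p ∣ D) (k : ℕ) :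
    ((dst p D)^[k] s) * p ^ k ≡ s [MOD D] := by
  induction k with
  | zero => simp [Nat.ModEq.refl]
  | succ k ih =>
    rw [Function.iterate_succ_apply']
    have h1 : p * dst p D ((dst p D)^[k] s) ≡ (dst p D)^[k] s [MOD D] := by
      rw [dst_mul hD]
      refine ((Nat.modEq_iff_dvd' (Nat.le_add_right _ _)).mpr ?_).symm
      rw [Nat.add_sub_cancel_left]
      exact dvd_mul_left D _
    calc dst p D ((dst p D)^[k] s) * p ^ (k + 1)
        = (p * dst p D ((dst p D)^[k] s)) * p ^ k := by ring
      _ ≡ ((dst p D)^[k] s) * p ^ k [MOD D] := h1.mul_right _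
      _ ≡ s [MOD D] := ih

lemma dst_cycle {D s k : ℕ} (hD : ¬ p ∣ D) (hs : 0 < s) (hsD : s < D)
    (hk : p ^ k ≡ 1 [MOD D]) : (dst p D)^[k] s = s := by
  have h1 := dst_iter_modeq (s := s) hD k
  have h2 : ((dst p D)^[k] s) * p ^ k ≡ ((dst p D)^[k] s) * 1 [MOD D] := hk.mul_left _
  have h3 : ((dst p D)^[k] s) ≡ s [MOD D] := by
    calc (dst p D)^[k] s = ((dst p D)^[k] s) * 1 := by ring
      _ ≡ ((dst p D)^[k] s) * p ^ k [MOD D] := h2.symm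
      _ ≡ s [MOD D] := h1
  have hb := dst_iter_bounds (s := s) hD hs hsD k
  have := h3.eq_of_lt_of_lt hb.2 hsD
  exact this

lemma ITER {D : ℕ} (hD : ¬ p ∣ D) (hDp : D < p) :
    ∀ k s v m : ℕ, 0 < s → s < D → v < p ^ k →
    ‖q p D s (v + p ^ k * m) - q p D s v * q p D ((dst p D)^[k] s) m‖ < 1 := by
  intro k
  induction k with
  | zero =>
    intro s v m hs hsD hv
    have hv0 : v = 0 := by simpa using hv
    subst hv0
    have hq0 : q p D s 0 = 1 := by simp [q, Pp]
    simp only [pow_zero, one_mul, Function.iterate_zero_apply, hq0, Nat.zero_add]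
    simp
  | succ k ih =>
    intro s v m hs hsD hv
    set v₀ := v % p with hv₀def
    set w := v / p with hwdef
    have hv₀ : v₀ < p := Nat.mod_lt _ hp.out.pos
    have hvw : v₀ + p * w = v := Nat.mod_add_div v p
    have hw : w < p ^ k := by
      rw [hwdef, Nat.div_lt_iff_lt_mul hp.out.pos]
      calc v < p ^ (k + 1) := hv
        _ = p ^ k * p := by ring
    set s' := dst p D s with hs'def
    have hs'pos : 0 < s' := dst_pos hD hs
    have hs'lt : s' < D := dst_lt hD hsD
    have hiter : (dst p D)^[k + 1] s = (dst p D)^[k] s' := Function.iterate_succ_apply _ _ _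
    have hskb := dst_iter_bounds (s := s') hD hs'pos hs'lt k
    have harg : v + p ^ (k + 1) * m = v₀ + p * (w + p ^ k * m) := by
      have : p * (w + p ^ k * m) = p * w + p ^ (k + 1) * m := by ring
      omega
    have t1 : ‖q p D s (v + p ^ (k + 1) * m) - q p D s v₀ * q p D s' (w + p ^ k * m)‖ < 1 := by
      rw [harg]
      exact STEP hD hDp hs hsD hv₀ (w + p ^ k * m)
    have hqv₀ : ‖q p D s v₀‖ ≤ 1 := INT hD hDp v₀ s hs hsD
    have t2 : ‖q p D s v₀ * q p D s' (w + p ^ k * m) -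
        q p D s v₀ * (q p D s' w * q p D ((dst p D)^[k] s') m)‖ < 1 :=
      norm_mul_sub _ _ _ hqv₀ (ih s' w m hs'pos hs'lt hw)
    have hqkm : ‖q p D ((dst p D)^[k] s') m‖ ≤ 1 := INT hD hDp m _ hskb.1 hskb.2
    have t3 : ‖q p D s v₀ * (q p D s' w * q p D ((dst p D)^[k] s') m) -
        q p D s v * q p D ((dst p D)^[k] s') m‖ < 1 := by
      have h := STEP hD hDp hs hsD hv₀ w
      rw [hvw] at h
      have h' : ‖q p D s v₀ * q p D s' w - q p D s v‖ < 1 := by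
        rw [norm_sub_rev] at h; exact h
      have := norm_mul_sub (q p D ((dst p D)^[k] s') m) _ _ hqkm h'
      calc ‖q p D s v₀ * (q p D s' w * q p D ((dst p D)^[k] s') m) -
            q p D s v * q p D ((dst p D)^[k] s') m‖
          = ‖q p D ((dst p D)^[k] s') m * (q p D s v₀ * q p D s' w) -
            q p D ((dst p D)^[k] s') m * q p D s v‖ := by ring_nf
        _ < 1 := this
    rw [hiter]
    exact norm_sub_trans _ _ _ (norm_sub_trans _ _ _ t1 t2) t3
/- ---- bridges between ℚ_[p] norms and the integer statements ---- -/

lemma norm_int_unit {n : ℤ} (hn : ¬ (p:ℤ) ∣ n) : ‖(n : ℚ_[p])‖ = 1 := by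
  have h1 : ‖(n : ℚ_[p])‖ ≤ 1 := Padic.norm_int_le_one _
  have h2 : ¬ ‖(n : ℚ_[p])‖ < 1 := fun h => hn (Padic.norm_intCast_lt_one_iff.mp h)
  rcases lt_or_eq_of_le h1 with h | h
  · exact absurd h h2
  · exact h

lemma den_cop {x : ℚ} (h : ‖(x : ℚ_[p])‖ ≤ 1) : ¬ p ∣ x.den := by
  intro hpden
  have hnum : ¬ (p:ℤ) ∣ x.num := by
    intro hn
    have h1 : p ∣ x.num.natAbs := by
      have := Int.natAbs_dvd_natAbs.mpr hn
      simpa using this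
    have h2 := Nat.dvd_gcd h1 hpden
    rw [x.reduced] at h2
    exact hp.out.one_lt.ne' (Nat.dvd_one.mp h2)
  have hdnz : ((x.den : ℕ) : ℚ_[p]) ≠ 0 := Nat.cast_ne_zero.mpr x.den_nz
  have hdenlt : ‖((x.den : ℕ) : ℚ_[p])‖ < 1 := by
    have : ((p:ℤ)) ∣ ((x.den : ℕ) : ℤ) := Int.natCast_dvd_natCast.mpr hpden
    have h' := (Padic.norm_intCast_lt_one_iff (k := ((x.den : ℕ) : ℤ))).mpr this
    push_cast at h'
    exact h'
  have hxc : (x : ℚ_[p]) = (x.num : ℚ_[p]) / ((x.den : ℕ) : ℚ_[p]) := by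
    rw [Rat.cast_def]
  rw [hxc, norm_div, norm_int_unit hnum] at h
  have hpos : 0 < ‖((x.den : ℕ) : ℚ_[p])‖ := norm_pos_iff.mpr hdnz
  rw [div_le_one hpos] at h
  linarith

lemma den_mul_self (x : ℚ) : (x.den : ℚ) * x = x.num := by
  have hd : (0:ℚ) < x.den := by exact_mod_cast x.pos
  have hq := Rat.num_div_den x
  have h3 : ((x.num:ℚ)/x.den) * x.den = x.num := div_mul_cancel₀ _ (ne_of_gt hd)
  rw [hq] at h3; linarith [h3]

lemma bridge_le {x : ℚ} (h : ‖(x : ℚ_[p])‖ ≤ 1) :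
    ∃ a b : ℤ, ¬ (p:ℤ) ∣ b ∧ (b : ℚ) * x = a := by
  refine ⟨x.num, (x.den : ℤ), ?_, ?_⟩
  · intro hdvd
    exact den_cop h (Int.natCast_dvd_natCast.mp hdvd)
  · push_cast
    exact den_mul_self x

lemma bridge_lt {x : ℚ} (h : ‖(x : ℚ_[p])‖ < 1) :
    ∃ a b : ℤ, (p:ℤ) ∣ a ∧ ¬ (p:ℤ) ∣ b ∧ (b : ℚ) * x = a := by
  have hden := den_cop h.le
  refine ⟨x.num, (x.den : ℤ), ?_, ?_, ?_⟩
  · rw [← Padic.norm_intCast_lt_one_iff]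
    have hxc : (x : ℚ_[p]) = (x.num : ℚ_[p]) / ((x.den : ℕ) : ℚ_[p]) := by
      rw [Rat.cast_def]
    have hdnz : ((x.den : ℕ) : ℚ_[p]) ≠ 0 := Nat.cast_ne_zero.mpr x.den_nz
    have hnum : (x.num : ℚ_[p]) = (x : ℚ_[p]) * ((x.den : ℕ) : ℚ_[p]) := by
      rw [hxc, div_mul_cancel₀ _ hdnz]
    rw [hnum, norm_mul]
    have hd1 : ‖((x.den : ℕ) : ℚ_[p])‖ ≤ 1 := by
      have := Padic.norm_int_le_one (p := p) ((x.den : ℕ) : ℤ)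
      push_cast at this; exact this
    calc ‖(x : ℚ_[p])‖ * ‖((x.den : ℕ) : ℚ_[p])‖ ≤ ‖(x : ℚ_[p])‖ * 1 :=
        mul_le_mul_of_nonneg_left hd1 (norm_nonneg _)
      _ = ‖(x : ℚ_[p])‖ := by ring
      _ < 1 := h
  · intro hdvd
    exact hden (Int.natCast_dvd_natCast.mp hdvd)
  · push_cast
    exact den_mul_self x

/- ---- products ---- -/

lemma prod_norm_le_one {ι : Type*} (s : Finset ι) (f : ι → ℚ_[p])
    (hf : ∀ i ∈ s, ‖f i‖ ≤ 1) : ‖∏ i ∈ s, f i‖ ≤ 1 := by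
  classical
  induction s using Finset.induction_on with
  | empty => simp
  | @insert a s' hx ih =>
    rw [Finset.prod_insert hx, norm_mul]
    have h1 := hf a (Finset.mem_insert_self a s')
    have h2 := ih (fun i hi => hf i (Finset.mem_insert_of_mem hi))
    calc ‖f a‖ * ‖∏ i ∈ s', f i‖ ≤ 1 * 1 :=
        mul_le_mul h1 h2 (norm_nonneg _) zero_le_one
      _ = 1 := by ring

lemma prod_sub_lt {ι : Type*} (s : Finset ι) (f g : ι → ℚ_[p])
    (hf : ∀ i ∈ s, ‖f i‖ ≤ 1) (hg : ∀ i ∈ s, ‖g i‖ ≤ 1)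
    (h : ∀ i ∈ s, ‖f i - g i‖ < 1) :
    ‖(∏ i ∈ s, f i) - ∏ i ∈ s, g i‖ < 1 := by
  classical
  induction s using Finset.induction_on with
  | empty => simp
  | @insert a s' hx ih =>
    rw [Finset.prod_insert hx, Finset.prod_insert hx]
    have hkey : f a * ∏ i ∈ s', f i - g a * ∏ i ∈ s', g i
        = f a * ((∏ i ∈ s', f i) - ∏ i ∈ s', g i) + (f a - g a) * ∏ i ∈ s', g i := by
      ring
    rw [hkey]
    apply lt_of_le_of_lt (Padic.nonarchimedean _ _)
    apply max_lt
    · rw [norm_mul]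
      have h1 := hf a (Finset.mem_insert_self a s')
      have h2 := ih (fun i hi => hf i (Finset.mem_insert_of_mem hi))
        (fun i hi => hg i (Finset.mem_insert_of_mem hi))
        (fun i hi => h i (Finset.mem_insert_of_mem hi))
      calc ‖f a‖ * ‖(∏ i ∈ s', f i) - ∏ i ∈ s', g i‖
          ≤ 1 * ‖(∏ i ∈ s', f i) - ∏ i ∈ s', g i‖ :=
            mul_le_mul_of_nonneg_right h1 (norm_nonneg _)
        _ = ‖(∏ i ∈ s', f i) - ∏ i ∈ s', g i‖ := by ring
        _ < 1 := h2
    · rw [norm_mul]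
      have h1 := h a (Finset.mem_insert_self a s')
      have h2 := prod_norm_le_one s' g (fun i hi => hg i (Finset.mem_insert_of_mem hi))
      calc ‖f a - g a‖ * ‖∏ i ∈ s', g i‖ ≤ ‖f a - g a‖ * 1 :=
          mul_le_mul_of_nonneg_left h2 (norm_nonneg _)
        _ = ‖f a - g a‖ := by ring
        _ < 1 := h1

/- ---- pochhammer / q connection ---- -/

lemma poch_eval (x : ℚ) (n : ℕ) :
    (ascPochhammer ℚ n).eval x = ∏ j ∈ Finset.range n, (x + j) := by
  induction n with
  | zero => simp
  | succ n ih =>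
    rw [ascPochhammer_succ_right, Finset.prod_range_succ, ← ih]
    simp [Polynomial.eval_mul]

lemma qcast (x : ℚ) (h0 : 0 < x) (n : ℕ) :
    ((((ascPochhammer ℚ n).eval x) / (n ! : ℚ) : ℚ) : ℚ_[p])
      = q p x.den x.num.toNat n := by
  have hnum0 : (0:ℤ) ≤ x.num := le_of_lt (Rat.num_pos.mpr h0)
  have hsnum : (x.num.toNat : ℤ) = x.num := Int.toNat_of_nonneg hnum0
  have hD0 : ((x.den : ℕ) : ℚ_[p]) ≠ 0 := Nat.cast_ne_zero.mpr x.den_nz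
  have hxc : (x : ℚ_[p]) = ((x.num.toNat : ℕ) : ℚ_[p]) / ((x.den : ℕ) : ℚ_[p]) := by
    have hn : ((x.num.toNat : ℕ) : ℚ_[p]) = ((x.num : ℤ) : ℚ_[p]) := by
      exact_mod_cast congrArg (Int.cast : ℤ → ℚ_[p]) hsnum
    rw [Rat.cast_def, ← hn]
  rw [poch_eval, Rat.cast_div]
  have hprod : ((∏ j ∈ Finset.range n, (x + j) : ℚ) : ℚ_[p])
      = ∏ j ∈ Finset.range n, ((x : ℚ_[p]) + j) := by
    rw [Rat.cast_prod]
    apply Finset.prod_congr rfl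
    intro j _
    push_cast
    ring
  have hfac : ∀ j ∈ Finset.range n, ((x : ℚ_[p]) + j)
      = ((x.num.toNat + j * x.den : ℕ) : ℚ_[p]) / ((x.den : ℕ) : ℚ_[p]) := by
    intro j _
    rw [hxc, div_add' _ _ _ hD0]
    push_cast
    ring_nf
  rw [hprod, Finset.prod_congr rfl hfac, Finset.prod_div_distrib, Finset.prod_const,
    Finset.card_range]
  rw [q, Pp]
  push_cast
  rw [div_div]


lemma num_lt_den {x : ℚ} (h : x < 1) : x.num < (x.den : ℤ) := by
  by_contra hc
  push_neg at hc
  have hd : (0:ℚ) < x.den := by exact_mod_cast x.pos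
  have hq := Rat.num_div_den x
  have hnum : x * (x.den:ℚ) = x.num := by
    have h3 : ((x.num:ℚ)/x.den) * x.den = x.num := div_mul_cancel₀ _ (ne_of_gt hd)
    rw [hq] at h3; exact h3
  have h2 : (x.den:ℚ) ≤ x.num := by exact_mod_cast hc
  nlinarith

end HypLucas

/-- Let `α₁,…,α_r ∈ ℚ ∩ (0,1)` with `d` the lcm of their denominators, and
`Q(n) = (α₁)ₙ⋯(α_r)ₙ/(n!)^r`. For every prime `p > d` there is a positive integer `k` such
that `Q` has the `p^k`-Lucas property: `Q(n) ∈ ℤ_(p)` for all `n`, and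
`Q(a + p^k·m) ≡ Q(a)·Q(m) mod p·ℤ_(p)` for all `0 ≤ a ≤ p^k − 1` and `m ∈ ℕ`. -/
theorem hypergeometric_pk_lucas
    (r : ℕ) (α : Fin r → ℚ) (hα : ∀ i, 0 < α i ∧ α i < 1)
    (d : ℕ) (hd : d = Finset.univ.lcm fun i => (α i).den)
    (Q : ℕ → ℚ)
    (hQ : Q = fun n => (∏ i, (ascPochhammer ℚ n).eval (α i)) / (Nat.factorial n : ℚ) ^ r) :
    ∀ p : ℕ, p.Prime → d < p →
      ∃ k : ℕ, 0 < k ∧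
        (∀ n : ℕ, ∃ a b : ℤ, ¬ (p : ℤ) ∣ b ∧ (b : ℚ) * Q n = (a : ℚ)) ∧
        ∀ v m : ℕ, v ≤ p ^ k - 1 →
          ∃ a b : ℤ, (p : ℤ) ∣ a ∧ ¬ (p : ℤ) ∣ b ∧
            (b : ℚ) * (Q (v + p ^ k * m) - Q v * Q m) = (a : ℚ) := by
  intro p hpp hdp
  haveI : Fact p.Prime := ⟨hpp⟩
  have hd0 : d ≠ 0 := by
    rw [hd]; intro h0
    obtain ⟨i, -, hi⟩ := Finset.lcm_eq_zero_iff.mp h0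
    exact (α i).den_nz hi
  set k := d.totient with hk
  have hk0 : 0 < k := Nat.totient_pos.mpr (Nat.pos_of_ne_zero hd0)
  have hpd : ¬ p ∣ d := fun h =>
    absurd (Nat.le_of_dvd (Nat.pos_of_ne_zero hd0) h) (by omega)
  have hcop : p.Coprime d := (Nat.Prime.coprime_iff_not_dvd hpp).mpr hpd
  have hmod : p ^ k ≡ 1 [MOD d] := Nat.ModEq.pow_totient hcop
  have hDdvd : ∀ i, (α i).den ∣ d := fun i => hd ▸ Finset.dvd_lcm (Finset.mem_univ i)
  have hDlt : ∀ i, (α i).den < p := fun i =>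
    lt_of_le_of_lt (Nat.le_of_dvd (Nat.pos_of_ne_zero hd0) (hDdvd i)) hdp
  have hpD : ∀ i, ¬ p ∣ (α i).den := fun i h =>
    absurd (Nat.le_of_dvd (α i).pos h) (by have := hDlt i; omega)
  have hspos : ∀ i, 0 < (α i).num.toNat := fun i => by
    have h1 := Rat.num_pos.mpr (hα i).1
    have h2 : ((α i).num.toNat : ℤ) = (α i).num := Int.toNat_of_nonneg (le_of_lt h1)
    omega
  have hslt : ∀ i, (α i).num.toNat < (α i).den := fun i => by
    have h1 := HypLucas.num_lt_den (hα i).2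
    have h0 := Rat.num_pos.mpr (hα i).1
    have h2 : ((α i).num.toNat : ℤ) = (α i).num := Int.toNat_of_nonneg (le_of_lt h0)
    omega
  have hQcast : ∀ n : ℕ, ((Q n : ℚ) : ℚ_[p]) = ∏ i, HypLucas.q p (α i).den ((α i).num.toNat) n := by
    intro n
    have h1 : Q n = ∏ i, ((ascPochhammer ℚ n).eval (α i) / (n.factorial : ℚ)) := by
      simp only [hQ]
      rw [Finset.prod_div_distrib, Finset.prod_const, Finset.card_univ, Fintype.card_fin]
    rw [h1, Rat.cast_prod]
    exact Finset.prod_congr rfl fun i _ => HypLucas.qcast (α i) (hα i).1 n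
  have hint : ∀ n, ‖((Q n : ℚ) : ℚ_[p])‖ ≤ 1 := fun n => by
    rw [hQcast n]
    exact HypLucas.prod_norm_le_one _ _ fun i _ =>
      HypLucas.INT (hpD i) (hDlt i) n _ (hspos i) (hslt i)
  refine ⟨k, hk0, fun n => HypLucas.bridge_le (hint n), ?_⟩
  intro v m hv
  have hvlt : v < p ^ k := by
    have hppos : 0 < p ^ k := pow_pos hpp.pos k
    omega
  apply HypLucas.bridge_lt
  have hcastdiff : ((Q (v + p ^ k * m) - Q v * Q m : ℚ) : ℚ_[p])
      = (∏ i, HypLucas.q p (α i).den ((α i).num.toNat) (v + p ^ k * m))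
        - ∏ i, (HypLucas.q p (α i).den ((α i).num.toNat) v *
            HypLucas.q p (α i).den ((α i).num.toNat) m) := by
    push_cast
    rw [hQcast, hQcast, hQcast, Finset.prod_mul_distrib]
  rw [hcastdiff]
  apply HypLucas.prod_sub_lt
  · intro i _
    exact HypLucas.INT (hpD i) (hDlt i) _ _ (hspos i) (hslt i)
  · intro i _
    rw [norm_mul]
    have h1 := HypLucas.INT (hpD i) (hDlt i) v _ (hspos i) (hslt i)
    have h2 := HypLucas.INT (hpD i) (hDlt i) m _ (hspos i) (hslt i)
    calc ‖HypLucas.q p (α i).den ((α i).num.toNat) v‖ *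
          ‖HypLucas.q p (α i).den ((α i).num.toNat) m‖ ≤ 1 * 1 :=
        mul_le_mul h1 h2 (norm_nonneg _) zero_le_one
      _ = 1 := by ring
  · intro i _
    have hmodD : p ^ k ≡ 1 [MOD (α i).den] := Nat.ModEq.of_dvd (hDdvd i) hmod
    have hcyc := HypLucas.dst_cycle (hpD i) (hspos i) (hslt i) hmodD
    have hiter := HypLucas.ITER (hpD i) (hDlt i) k ((α i).num.toNat) v m
      (hspos i) (hslt i) hvlt
    rw [hcyc] at hiter
    exact hiter
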